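/- For every integer n ≥ 3, the derivative of dgn_n(α) = π − arctan( cos²(π/n)·(sin(π/n)+1)⁻²·tan α ) at α = 3π/4 − π/(2n) equals −1. -/

import Mathlib

open Real

noncomputable def dgn (n : ℕ) (α : ℝ) : ℝ :=
  π - Real.arctan ((Real.cos (π/n))^2 * ((Real.sin (π/n) + 1)^2)⁻¹ * Real.tan α)

theorem stmt4 (n : ℕ) (hn : 3 ≤ n) :
    HasDerivAt (dgn n) (-1) (3*π/4 - π/(2*n)) := by
  have hn0 : (0:ℝ) < n := by positivity
  set θ : ℝ := π / n with hθ
  have hθ0 : 0 < θ := by positivity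
  have hθlt : θ < π/2 := by
    rw [hθ, div_lt_div_iff₀ hn0 two_pos]
    nlinarith [Real.pi_pos, (show (3:ℝ) ≤ n by exact_mod_cast hn)]
  set α₀ : ℝ := 3*π/4 - π/(2*n) with hα
  set s : ℝ := Real.sin θ with hs
  set c : ℝ := Real.cos θ with hc
  have hc0 : 0 < c := Real.cos_pos_of_mem_Ioo ⟨by linarith, hθlt⟩
  have hs0 : 0 ≤ s := Real.sin_nonneg_of_nonneg_of_le_pi (le_of_lt hθ0) (by linarith [Real.pi_pos])
  have hsc : s^2 + c^2 = 1 := Real.sin_sq_add_cos_sq θ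
  have hs1 : s < 1 := by nlinarith
  have h2α : 2*α₀ = π + (π/2 - θ) := by rw [hα, hθ]; ring
  have hcos2 : Real.cos α₀ ^ 2 = (1 - s)/2 := by
    have := Real.cos_sq α₀
    rw [h2α, Real.cos_add, Real.cos_pi_div_two_sub] at this
    simp at this
    rw [this]; ring
  have hsin2 : Real.sin α₀ ^ 2 = (1 + s)/2 := by
    have := Real.sin_sq_add_cos_sq α₀
    nlinarith
  have hca : Real.cos α₀ ≠ 0 := by
    intro h; rw [h] at hcos2; nlinarith
  set C : ℝ := c^2 * ((s + 1)^2)⁻¹ with hC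
  have h1 : HasDerivAt Real.tan (1 / Real.cos α₀ ^ 2) α₀ := Real.hasDerivAt_tan hca
  have h2 : HasDerivAt (fun α => C * Real.tan α) (C * (1 / Real.cos α₀ ^ 2)) α₀ :=
    h1.const_mul C
  have h3 : HasDerivAt Real.arctan (1 / (1 + (C * Real.tan α₀)^2)) (C * Real.tan α₀) :=
    Real.hasDerivAt_arctan _
  have h4 := (h3.comp α₀ h2)
  have h5 : HasDerivAt (dgn n)
      (0 - 1 / (1 + (C * Real.tan α₀)^2) * (C * (1 / Real.cos α₀ ^ 2))) α₀ := by
    have := (hasDerivAt_const α₀ π).sub h4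
    convert this using 1 <;> rfl
  have hCpos : 0 < C := mul_pos (pow_pos hc0 2) (inv_pos.2 (pow_pos (by linarith : (0:ℝ) < s + 1) 2))
  have hc2 : c^2 = (1-s)*(1+s) := by nlinarith
  have hs1' : s + 1 ≠ 0 := by linarith
  have hCval : C = (1-s)/(1+s) := by
    rw [hC, hc2]; field_simp; ring
  have e2 : Real.cos α₀^2 + C^2 * Real.sin α₀^2 = C := by
    rw [hCval, hcos2, hsin2]; field_simp; ring
  have key : 1 / (1 + (C * Real.tan α₀)^2) * (C * (1 / Real.cos α₀ ^ 2)) = 1 := by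
    rw [Real.tan_eq_sin_div_cos,
      show 1 + (C * (Real.sin α₀ / Real.cos α₀))^2
          = (Real.cos α₀^2 + C^2 * Real.sin α₀^2) / Real.cos α₀^2 from by field_simp,
      e2]
    field_simp
  convert h5 using 1
  rw [key]; ring
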